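/- Set b = √(2(n−1)/M). For every ε > 0 there exists a₀ ∈ (0, b) such that for every a ∈ (0, a₀) the following holds: if g : [a, b) → ℝ is a solution of equation (1.4) on (a, b), continuous at a, with g(a) > 0, g'(a) > 0, and g > 0 on [a, b), then there exists ā ∈ (a, b) with g'(ā) = 0, and the smallest such ā satisfies ā < ε. -/

import Mathlib

/-- Equation (1.4): `g'' = (1 + g'²)·[((r/2) f'(r²+g²) − (n−1)/r) g' − (1/2) f'(r²+g²) g]`,
for a twice differentiable function `g` on the set `I`. -/
def SolvesEq14 (n : ℕ) (f : ℝ → ℝ) (g : ℝ → ℝ) (I : Set ℝ) : Prop :=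
  ∀ r ∈ I,
    HasDerivAt g (deriv g r) r ∧
    HasDerivAt (deriv g)
      ((1 + deriv g r ^ 2) *
        ((r / 2 * deriv f (r ^ 2 + g r ^ 2) - ((n : ℝ) - 1) / r) * deriv g r
          - deriv f (r ^ 2 + g r ^ 2) / 2 * g r)) r

open Set Filter Topology

set_option maxHeartbeats 1000000 in
lemma core_est (k : ℕ) (m M a c : ℝ) (hm : 0 < m) (hmM : m ≤ M)
    (ha : 0 < a) (hc1 : c ≤ 1) (hc2 : c^2 * M^2 ≤ 2*m) (hac : 4*a < c)
    (g F : ℝ → ℝ)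
    (hF : ∀ r, m ≤ F r ∧ F r ≤ M)
    (hode : ∀ r ∈ Set.Ioo a c, HasDerivAt g (deriv g r) r ∧
      HasDerivAt (deriv g)
        ((1 + deriv g r ^ 2) *
          ((r / 2 * F r - ((k:ℝ) + 1) / r) * deriv g r - F r / 2 * g r)) r)
    (hgpos : ∀ r ∈ Set.Ioo a c, 0 < g r)
    (hdpos : ∀ r ∈ Set.Ioo a c, 0 < deriv g r) :
    (c/4) * Real.exp (-(2 / (m / (4*((k:ℝ)+2)) * ((3*c/4)^(k+2) - (c/2)^(k+2))))) ≤ a := by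
  have hM : 0 < M := lt_of_lt_of_le hm hmM
  have hcpos : 0 < c := by linarith
  set W : ℝ → ℝ := fun r => r^(k+1) * deriv g r / g r with hWdef
  -- positivity of W
  have hWpos : ∀ x ∈ Set.Ioo a c, 0 < W x := by
    intro x hx
    have hxpos : 0 < x := lt_trans ha hx.1
    exact div_pos (mul_pos (pow_pos hxpos _) (hdpos x hx)) (hgpos x hx)
  -- key derivative bound
  have key : ∀ x ∈ Set.Ioo a c, ∃ d, HasDerivAt W d x ∧
      d ≤ -(x^(k+1) * ((deriv g x / g x)^2/2 + m/4)) := by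
    intro x hx
    obtain ⟨hgd, hg2⟩ := hode x hx
    have hgp := hgpos x hx
    have hdp := hdpos x hx
    have hxpos : 0 < x := lt_trans ha hx.1
    have hxc : x < c := hx.2
    set P := deriv g x with hP
    set Q := g x with hQ
    set Fx := F x with hFx
    set E := (1 + P ^ 2) * ((x / 2 * Fx - ((k:ℝ) + 1) / x) * P - Fx / 2 * Q) with hE
    have hnum : HasDerivAt (fun r => r^(k+1) * deriv g r)
        ((((k:ℝ)+1) * x^k) * P + x^(k+1) * E) x := by
      have h1 := (hasDerivAt_pow (k+1) x).mul hg2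
      simp at h1
      exact h1
    have hW : HasDerivAt W
        ((((((k:ℝ)+1) * x^k) * P + x^(k+1) * E) * Q - (x^(k+1) * P) * P) / Q^2) x :=
      hnum.div hgd (ne_of_gt hgp)
    refine ⟨_, hW, ?_⟩
    have hF1 : m ≤ Fx := (hF x).1
    have hF2 : Fx ≤ M := (hF x).2
    have hk0 : (0:ℝ) ≤ (k:ℝ) := Nat.cast_nonneg k
    -- x * E bound
    have hxc2 : x^2 ≤ c^2 := by nlinarith
    have hx2m : x^2 * M^2 ≤ 2*m := by nlinarith [mul_le_mul_of_nonneg_right hxc2 (sq_nonneg M)]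
    have hx2M : x^2 * M ≤ 2 := by nlinarith [mul_le_mul_of_nonneg_right hmM (le_of_lt hM)]
    have hxE : x * E ≤ (x^2*M/2 - ((k:ℝ)+1)) * P - (m/2)*Q*x := by
      have hBform : x * E = (1 + P^2) * ((x^2*Fx/2 - ((k:ℝ)+1)) * P - (Fx/2)*Q*x) := by
        rw [hE]; field_simp
      rw [hBform]
      have hx2P : (0:ℝ) ≤ x^2 * P := mul_nonneg (sq_nonneg x) (le_of_lt hdp)
      have hQx : (0:ℝ) < Q * x := mul_pos hgp hxpos
      have hB1 : (x^2*Fx/2 - ((k:ℝ)+1)) * P - (Fx/2)*Q*x ≤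
          (x^2*M/2 - ((k:ℝ)+1)) * P - (m/2)*Q*x := by
        nlinarith [mul_le_mul_of_nonneg_right hF2 hx2P, mul_le_mul_of_nonneg_right hF1 (le_of_lt hQx)]
      have hcoef : x^2*M/2 - ((k:ℝ)+1) ≤ 0 := by linarith
      have hBneg : (x^2*M/2 - ((k:ℝ)+1)) * P - (m/2)*Q*x < 0 := by
        have h2 : (x^2*M/2 - ((k:ℝ)+1)) * P ≤ 0 := mul_nonpos_of_nonpos_of_nonneg hcoef (le_of_lt hdp)
        nlinarith [mul_pos (mul_pos hm hgp) hxpos]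
      nlinarith [mul_nonneg (sq_nonneg P) (le_of_lt (neg_pos.mpr (lt_of_le_of_lt hB1 hBneg)))]
    -- main inequality
    rw [div_le_iff₀ (by positivity)]
    have hxk : (0:ℝ) < x^k := pow_pos hxpos k
    -- AM-GM
    have hamgm : x*M*P*Q/2 ≤ P^2/2 + m/4*Q^2 := by
      nlinarith [sq_nonneg (P - x*M/2*Q), mul_nonneg (sub_nonneg.mpr hx2m) (sq_nonneg Q)]
    have hmul : x^k*(x*E)*Q ≤ x^k*((x^2*M/2 - ((k:ℝ)+1)) * P - (m/2)*Q*x)*Q := by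
      have := mul_le_mul_of_nonneg_right (mul_le_mul_of_nonneg_left hxE (le_of_lt hxk)) (le_of_lt hgp)
      linarith
    have hkey2 : x^k*(x*(x*M*P*Q/2)) ≤ x^k*(x*(P^2/2 + m/4*Q^2)) :=
      mul_le_mul_of_nonneg_left (mul_le_mul_of_nonneg_left hamgm (le_of_lt hxpos)) (le_of_lt hxk)
    have hexp : -(x^(k+1) * ((P/Q)^2/2 + m/4)) * Q^2 = -(x^k*(x*(P^2/2 + m/4*Q^2))) := by
      field_simp; ring
    rw [hexp]
    have hid1 : (((k:ℝ)+1) * x^k * P + x^(k+1) * E) * Q - x^(k+1) * P * P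
        = x^k*(x*E)*Q + (((k:ℝ)+1)*x^k*P*Q - x^k*(x*(P^2)))  := by ring
    have hid2 : x^k*((x^2*M/2 - ((k:ℝ)+1)) * P - (m/2)*Q*x)*Q
        = x^k*(x*(x*M*P*Q/2)) - ((k:ℝ)+1)*x^k*P*Q - x^k*(x*(m/2*Q^2)) := by ring
    rw [hid1]
    have hfin : x^k*(x*E)*Q ≤ x^k*(x*(P^2/2 + m/4*Q^2)) - ((k:ℝ)+1)*x^k*P*Q - x^k*(x*(m/2*Q^2)) := by
      calc x^k*(x*E)*Q ≤ x^k*((x^2*M/2 - ((k:ℝ)+1)) * P - (m/2)*Q*x)*Q := hmul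
        _ = x^k*(x*(x*M*P*Q/2)) - ((k:ℝ)+1)*x^k*P*Q - x^k*(x*(m/2*Q^2)) := hid2
        _ ≤ x^k*(x*(P^2/2 + m/4*Q^2)) - ((k:ℝ)+1)*x^k*P*Q - x^k*(x*(m/2*Q^2)) := by linarith
    have hrest : x^k*(x*(P^2/2 + m/4*Q^2)) - x^k*(x*(m/2*Q^2)) + (- x^k*(x*(P^2)))
        ≤ -(x^k*(x*(P^2/2 + m/4*Q^2))) := by
      have : x^k*(x*(P^2/2 + m/4*Q^2)) - x^k*(x*(m/2*Q^2)) - x^k*(x*(P^2))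
          + x^k*(x*(P^2/2 + m/4*Q^2)) = 0 := by ring
      linarith
    linarith
  have hk2 : (0:ℝ) < (k:ℝ)+2 := by positivity
  set mm := m/(4*((k:ℝ)+2)) with hmm
  have hmmpos : 0 < mm := by positivity
  have hWdiff : ∀ x ∈ Set.Ioo a c, DifferentiableAt ℝ W x := fun x hx =>
    (key x hx).choose_spec.1.differentiableAt
  -- A : antitone of W r + mm * r^(k+2) on [c/2, 3c/4]
  have hsubA : Icc (c/2) (3*c/4) ⊆ Ioo a c := by
    intro x hx; exact ⟨by linarith [hx.1], by linarith [hx.2]⟩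
  have hAanti : AntitoneOn (fun r => W r + mm * r^(k+2)) (Icc (c/2) (3*c/4)) := by
    have hdiff : ∀ x ∈ Icc (c/2) (3*c/4), DifferentiableAt ℝ (fun r => W r + mm * r^(k+2)) x :=
      fun x hx => (hWdiff x (hsubA hx)).add (((differentiable_pow (k+2)) x).const_mul mm)
    apply antitoneOn_of_deriv_nonpos (convex_Icc _ _)
    · exact fun x hx => (hdiff x hx).continuousAt.continuousWithinAt
    · intro x hx; rw [interior_Icc] at hx
      exact (hdiff x ⟨hx.1.le, hx.2.le⟩).differentiableWithinAt
    · intro x hx; rw [interior_Icc] at hx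
      have hxmem : x ∈ Ioo a c := hsubA ⟨hx.1.le, hx.2.le⟩
      have hxpos : 0 < x := lt_trans ha hxmem.1
      obtain ⟨d, hd, hdle⟩ := key x hxmem
      have hp : HasDerivAt (fun r : ℝ => mm * r^(k+2)) (mm * (((k:ℝ)+2) * x^(k+1))) x := by
        have := (hasDerivAt_pow (k+2) x).const_mul mm
        simpa using this
      have hder : HasDerivAt (fun r => W r + mm * r^(k+2)) (d + mm * (((k:ℝ)+2) * x^(k+1))) x :=
        hd.add hp
      rw [hder.deriv]
      have hsimp : mm * (((k:ℝ)+2) * x^(k+1)) = m/4 * x^(k+1) := by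
        rw [hmm]; field_simp
      rw [hsimp]
      nlinarith [hdle, mul_nonneg (pow_nonneg hxpos.le (k+1)) (sq_nonneg (deriv g x / g x))]
  -- B : monotone of 1/W r - log r / 2 on [2a, c/2]
  have hsubB : Icc (2*a) (c/2) ⊆ Ioo a c := by
    intro x hx; exact ⟨by linarith [hx.1], by linarith [hx.2]⟩
  have hBmono : MonotoneOn (fun r => 1 / W r - Real.log r / 2) (Icc (2*a) (c/2)) := by
    have hdiff : ∀ x ∈ Icc (2*a) (c/2), DifferentiableAt ℝ (fun r => 1 / W r - Real.log r / 2) x := by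
      intro x hx
      have hxmem := hsubB hx
      have hxpos : 0 < x := lt_trans ha hxmem.1
      exact (((differentiable_const (1:ℝ)) x).div (hWdiff x hxmem) (ne_of_gt (hWpos x hxmem))).sub
        ((Real.differentiableAt_log (ne_of_gt hxpos)).div_const 2)
    apply monotoneOn_of_deriv_nonneg (convex_Icc _ _)
    · exact fun x hx => (hdiff x hx).continuousAt.continuousWithinAt
    · intro x hx; rw [interior_Icc] at hx
      exact (hdiff x ⟨hx.1.le, hx.2.le⟩).differentiableWithinAt
    · intro x hx; rw [interior_Icc] at hx
      have hxmem : x ∈ Ioo a c := hsubB ⟨hx.1.le, hx.2.le⟩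
      have hxpos : 0 < x := lt_trans ha hxmem.1
      obtain ⟨d, hd, hdle⟩ := key x hxmem
      have hWx := hWpos x hxmem
      have h1 : HasDerivAt (fun r => 1 / W r) ((0 * W x - 1 * d) / (W x)^2) x :=
        (hasDerivAt_const x (1:ℝ)).div hd (ne_of_gt hWx)
      have h2 : HasDerivAt (fun r => Real.log r / 2) (x⁻¹ / 2) x :=
        (Real.hasDerivAt_log (ne_of_gt hxpos)).div_const 2
      have hder : HasDerivAt (fun r => 1 / W r - Real.log r / 2) _ x := h1.sub h2
      rw [hder.deriv]
      -- show 0 ≤ -(d/(W x)^2) - x⁻¹/2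
      set w := deriv g x / g x with hw
      have hwpos : 0 < w := div_pos (hdpos x hxmem) (hgpos x hxmem)
      have hWeq : W x = x^(k+1) * w := by rw [hWdef, hw]; simp [mul_div_assoc]
      have hWsq : (W x)^2 = x^(2*k+2) * w^2 := by
        rw [hWeq, mul_pow, ← pow_mul]
        congr 2
        omega
      have hle1 : x ≤ 1 := le_of_lt (lt_of_lt_of_le hxmem.2 hc1)
      have hpowle : x^(2*k+2) ≤ x * x^(k+1) := by
        calc x^(2*k+2) ≤ x^(k+2) := pow_le_pow_of_le_one hxpos.le hle1 (by omega)
          _ = x * x^(k+1) := by rw [← pow_succ']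
      have hWsqpos : 0 < (W x)^2 := by positivity
      have hd2 : x⁻¹/2 * (W x)^2 ≤ -d := by
        have e1 : x⁻¹/2 * (W x)^2 = x⁻¹ * x^(2*k+2) * w^2 / 2 := by rw [hWsq]; ring
        have e2 : x⁻¹ * x^(2*k+2) * w^2 / 2 ≤ x⁻¹ * (x * x^(k+1)) * w^2 / 2 := by
          have h3 := mul_le_mul_of_nonneg_right
            (mul_le_mul_of_nonneg_left hpowle (inv_nonneg.mpr hxpos.le)) (sq_nonneg w)
          linarith
        have e3 : x⁻¹ * (x * x^(k+1)) * w^2 / 2 = x^(k+1) * w^2 / 2 := by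
          field_simp
        have e4 : x^(k+1) * w^2 / 2 ≤ -d := by
          nlinarith [hdle, mul_nonneg (pow_nonneg hxpos.le (k+1)) hm.le]
        linarith
      have hfin : x⁻¹/2 ≤ -d / (W x)^2 := (le_div_iff₀ hWsqpos).mpr hd2
      have : (0 * W x - 1 * d) / (W x)^2 = -d / (W x)^2 := by ring_nf
      rw [this]
      linarith
  -- apply A
  have hm1 : c/2 ∈ Icc (c/2) (3*c/4) := ⟨le_refl _, by linarith⟩
  have hm2 : (3*c/4) ∈ Icc (c/2) (3*c/4) := ⟨by linarith, le_refl _⟩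
  have hA' : W (3*c/4) + mm*(3*c/4)^(k+2) ≤ W (c/2) + mm*(c/2)^(k+2) :=
    hAanti hm1 hm2 (by linarith)
  have hW34pos : 0 < W (3*c/4) := hWpos _ (hsubA hm2)
  have hWc2pos : 0 < W (c/2) := hWpos _ (hsubA hm1)
  set L := mm * ((3*c/4)^(k+2) - (c/2)^(k+2)) with hL
  have hLpos : 0 < L := by
    have : (c/2)^(k+2) < (3*c/4)^(k+2) :=
      pow_lt_pow_left₀ (by linarith) (by linarith) (by omega)
    have h0 : 0 < (3*c/4)^(k+2) - (c/2)^(k+2) := by linarith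
    exact mul_pos hmmpos h0
  have hWc2 : L ≤ W (c/2) := by
    have hexp : L = mm*(3*c/4)^(k+2) - mm*(c/2)^(k+2) := by rw [hL]; ring
    linarith
  -- apply B
  have hn1 : (2*a) ∈ Icc (2*a) (c/2) := ⟨le_refl _, by linarith⟩
  have hn2 : c/2 ∈ Icc (2*a) (c/2) := ⟨by linarith, le_refl _⟩
  have hB' : 1 / W (2*a) - Real.log (2*a) / 2 ≤ 1 / W (c/2) - Real.log (c/2) / 2 :=
    hBmono hn1 hn2 (by linarith)
  have hW2apos : 0 < W (2*a) := hWpos _ (hsubB hn1)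
  have hinvpos : 0 < 1 / W (2*a) := by positivity
  have hDle : Real.log (c/2) - Real.log (2*a) ≤ 2 / L := by
    have h5 : (Real.log (c/2) - Real.log (2*a))/2 ≤ 1 / W (c/2) := by linarith
    have h6 : 1 / W (c/2) ≤ 1 / L := one_div_le_one_div_of_le hLpos hWc2
    have h7 : 1 / L = (2/L)/2 := by ring
    linarith
  have hlogd : Real.log (c/(4*a)) = Real.log (c/2) - Real.log (2*a) := by
    have hsplit : (c/2)/(2*a) = c/(4*a) := by rw [div_div]; congr 1; ring
    rw [← hsplit]
    exact Real.log_div (by positivity) (by positivity)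
  have hca : 0 < c/(4*a) := by positivity
  have h8 : c/(4*a) ≤ Real.exp (2/L) := by
    rw [← Real.log_le_iff_le_exp hca, hlogd]; exact hDle
  have h9 : c/4 ≤ a * Real.exp (2/L) := by
    rw [div_le_iff₀ (by positivity : (0:ℝ) < 4*a)] at h8
    nlinarith
  have hepos := Real.exp_pos (2/L)
  rw [hL, hmm] at *
  rw [Real.exp_neg]
  rw [mul_inv_le_iff₀ hepos]
  linarith [h9]

/-- Any positive increasing solution of (1.4) starting at a sufficiently small `a > 0`
must have a first critical point `ā ∈ (a, √(2(n-1)/M))`, and `ā → 0` as `a → 0`. -/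
theorem critical_point_near_origin
    (n : ℕ) (hn : 2 ≤ n) (m M : ℝ) (hm : 0 < m) (hmM : m ≤ M)
    (f : ℝ → ℝ) (hf : ContDiff ℝ 2 f)
    (hconv : ∀ s : ℝ, 0 ≤ deriv (deriv f) s)
    (hlow : ∀ s : ℝ, m ≤ deriv f s) (hup : ∀ s : ℝ, deriv f s ≤ M)
    (b : ℝ) (hb : b = Real.sqrt (2 * ((n : ℝ) - 1) / M)) :
    ∀ ε : ℝ, 0 < ε →
      ∃ a₀ ∈ Set.Ioo (0 : ℝ) b, ∀ a ∈ Set.Ioo (0 : ℝ) a₀,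
        ∀ g : ℝ → ℝ,
          ContinuousWithinAt g (Set.Ici a) a →
          SolvesEq14 n f g (Set.Ioo a b) →
          0 < g a →
          (∃ d : ℝ, 0 < d ∧ HasDerivWithinAt g d (Set.Ici a) a) →
          (∀ r ∈ Set.Ico a b, 0 < g r) →
          ({r : ℝ | r ∈ Set.Ioo a b ∧ deriv g r = 0}).Nonempty ∧
          sInf {r : ℝ | r ∈ Set.Ioo a b ∧ deriv g r = 0} < ε := by
  intro ε hε
  obtain ⟨k, rfl⟩ : ∃ k, n = k + 2 := ⟨n - 2, by omega⟩
  have hM : 0 < M := lt_of_lt_of_le hm hmM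
  have hcast : ((k + 2 : ℕ) : ℝ) - 1 = (k : ℝ) + 1 := by push_cast; ring
  have hbpos : 0 < b := by
    rw [hb]
    apply Real.sqrt_pos.mpr
    rw [hcast]
    positivity
  set c := min (min ε (Real.sqrt (2*m) / M)) (min 1 (b/2)) with hc
  have hcpos : 0 < c := lt_min (lt_min hε (by positivity)) (lt_min one_pos (by positivity))
  have hcε : c ≤ ε := le_trans (min_le_left _ _) (min_le_left _ _)
  have hcs : c ≤ Real.sqrt (2*m) / M := le_trans (min_le_left _ _) (min_le_right _ _)
  have hc1 : c ≤ 1 := le_trans (min_le_right _ _) (min_le_left _ _)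
  have hcb : c ≤ b/2 := le_trans (min_le_right _ _) (min_le_right _ _)
  have hcb' : c < b := by linarith
  have hc2 : c^2 * M^2 ≤ 2*m := by
    have h1 : c * M ≤ Real.sqrt (2*m) := (le_div_iff₀ hM).mp hcs
    have h2 : (Real.sqrt (2*m))^2 = 2*m := Real.sq_sqrt (by positivity)
    have h3 : (c*M)^2 ≤ (Real.sqrt (2*m))^2 :=
      pow_le_pow_left₀ (by positivity) h1 2
    nlinarith [h3, h2]
  set L := m / (4*((k:ℝ)+2)) * ((3*c/4)^(k+2) - (c/2)^(k+2)) with hLdef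
  have hLpos : 0 < L := by
    have hlt : (c/2)^(k+2) < (3*c/4)^(k+2) :=
      pow_lt_pow_left₀ (by linarith) (by linarith) (by omega)
    have h0 : (0:ℝ) < (3*c/4)^(k+2) - (c/2)^(k+2) := by linarith
    exact mul_pos (by positivity) h0
  set a₀ := (c/4) * Real.exp (-(2/L)) with ha₀
  have hexp1 : Real.exp (-(2/L)) ≤ 1 := by
    apply Real.exp_le_one_iff.mpr
    have : 0 < 2/L := by positivity
    linarith
  have ha₀c : a₀ ≤ c/4 := by
    rw [ha₀]
    nlinarith [hexp1, hcpos]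
  refine ⟨a₀, ⟨by rw [ha₀]; positivity, by linarith⟩, ?_⟩
  intro a ha g hga hsol hga0 hdex hgpos
  obtain ⟨d, hd0, hdw⟩ := hdex
  have ha0 : 0 < a := ha.1
  have haa0 : a < a₀ := ha.2
  have hac : 4*a < c := by linarith
  -- translated ODE
  set F : ℝ → ℝ := fun s => deriv f (s ^ 2 + g s ^ 2) with hF
  have hode : ∀ r ∈ Set.Ioo a c, HasDerivAt g (deriv g r) r ∧
      HasDerivAt (deriv g)
        ((1 + deriv g r ^ 2) *
          ((r / 2 * F r - ((k:ℝ) + 1) / r) * deriv g r - F r / 2 * g r)) r := by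
    intro r hr
    have hrb : r ∈ Ioo a b := ⟨hr.1, lt_trans hr.2 hcb'⟩
    obtain ⟨h1, h2⟩ := hsol r hrb
    rw [hcast] at h2
    exact ⟨h1, h2⟩
  have hFb : ∀ r, m ≤ F r ∧ F r ≤ M := fun r => ⟨hlow _, hup _⟩
  have hgpos' : ∀ r ∈ Set.Ioo a c, 0 < g r :=
    fun r hr => hgpos r ⟨le_of_lt hr.1, lt_trans hr.2 hcb'⟩
  -- there is a point in (a,c) with nonpositive derivative
  have hr₀ : ∃ r₀ ∈ Set.Ioo a c, deriv g r₀ ≤ 0 := by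
    by_contra h
    push_neg at h
    have hcore := core_est k m M a c hm hmM ha0 hc1 hc2 hac g F hFb hode hgpos' h
    rw [← hLdef, ← ha₀] at hcore
    linarith
  obtain ⟨r₀, hr₀mem, hr₀le⟩ := hr₀
  have hz : ∃ z, z ∈ Ioo a b ∧ deriv g z = 0 ∧ z < ε := by
    rcases eq_or_lt_of_le hr₀le with heq | hlt
    · exact ⟨r₀, ⟨hr₀mem.1, lt_trans hr₀mem.2 hcb'⟩, heq,
        lt_of_lt_of_le hr₀mem.2 hcε⟩
    · -- find a point with positive derivative before r₀
      have hslope : Tendsto (slope g a) (𝓝[>] a) (𝓝 d) := by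
        have h := hasDerivWithinAt_iff_tendsto_slope.mp hdw
        rwa [Set.Ici_sdiff_left] at h
      have hev : ∀ᶠ x in 𝓝[>] a, 0 < slope g a x :=
        hslope.eventually (eventually_gt_nhds hd0)
      have hmem : Ioo a r₀ ∈ 𝓝[>] a := Ioo_mem_nhdsGT hr₀mem.1
      obtain ⟨x, hx1, hx2⟩ := (hev.and (eventually_of_mem hmem (fun y hy => hy))).exists
      have hax : a < x := hx2.1
      have hxb : x < b := lt_trans (lt_trans hx2.2 hr₀mem.2) hcb'
      have hgx : g a < g x := by
        rw [slope_def_field] at hx1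
        have hxa : 0 < x - a := sub_pos.mpr hax
        have := mul_pos hx1 hxa
        rw [div_mul_cancel₀ _ (ne_of_gt hxa)] at this
        linarith
      have hcont : ContinuousOn g (Icc a x) := by
        intro y hy
        rcases eq_or_lt_of_le hy.1 with rfl | hay
        · exact hga.mono Icc_subset_Ici_self
        · have hyb : y ∈ Ioo a b := ⟨hay, lt_of_le_of_lt hy.2 hxb⟩
          exact ((hsol y hyb).1.continuousAt).continuousWithinAt
      obtain ⟨ξ, hξmem, hξeq⟩ := exists_hasDerivAt_eq_slope g (deriv g) hax hcont
        (fun y hy => (hsol y ⟨hy.1, lt_trans hy.2 hxb⟩).1)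
      have hξpos : 0 < deriv g ξ := by
        rw [hξeq]
        exact div_pos (by linarith) (by linarith [hξmem.2])
      have hξr₀ : ξ ≤ r₀ := le_of_lt (lt_trans hξmem.2 hx2.2)
      have hcontd : ContinuousOn (deriv g) (Icc ξ r₀) := by
        intro y hy
        have hyb : y ∈ Ioo a b := ⟨lt_of_lt_of_le hξmem.1 hy.1,
          lt_of_le_of_lt hy.2 (lt_trans hr₀mem.2 hcb')⟩
        exact ((hsol y hyb).2.differentiableAt.continuousAt).continuousWithinAt
      have h0mem : (0:ℝ) ∈ Icc (deriv g r₀) (deriv g ξ) := ⟨le_of_lt hlt, le_of_lt hξpos⟩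
      obtain ⟨z, hzmem, hz0⟩ := intermediate_value_Icc' hξr₀ hcontd h0mem
      exact ⟨z, ⟨lt_of_lt_of_le hξmem.1 hzmem.1,
        lt_of_le_of_lt hzmem.2 (lt_trans hr₀mem.2 hcb')⟩, hz0,
        lt_of_le_of_lt hzmem.2 (lt_of_lt_of_le hr₀mem.2 hcε)⟩
  obtain ⟨z, hzmem, hz0, hzε⟩ := hz
  constructor
  · exact ⟨z, hzmem, hz0⟩
  · have hbdd : BddBelow {r : ℝ | r ∈ Ioo a b ∧ deriv g r = 0} :=
      ⟨a, fun y hy => le_of_lt hy.1.1⟩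
    exact lt_of_le_of_lt (csInf_le hbdd ⟨hzmem, hz0⟩) hzε
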